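/- Let D ≥ 1 and let K be a real positive-definite D×D matrix. Then the set 𝒮 := { (m, V) : m ∈ ℝ^D, V a real D×D positive-definite matrix } is convex, and the function h(m, V) := ½·( −log(det V) + log(det K) + trace(K⁻¹·V) + mᵀ·K⁻¹·m − D ) is convex on 𝒮. (This function equals the Kullback–Leibler divergence from N(m, V) to N(0, K).) -/

import Mathlib

open Matrix Finset

variable {D : ℕ}

lemma aux_posDef_of_posSemidef {A : Matrix (Fin D) (Fin D) ℝ} (hA : A.PosSemidef)
    (hdet : A.det ≠ 0) : A.PosDef := by
  refine posDef_iff_dotProduct_mulVec.2 ⟨hA.1, fun x hx => ?_⟩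
  rcases ((posSemidef_iff_dotProduct_mulVec.1 hA).2 x).eq_or_lt with h | h
  · exfalso
    have hz : A *ᵥ x = 0 := (hA.dotProduct_mulVec_zero_iff x).1 h.symm
    have h1 : A⁻¹ *ᵥ (A *ᵥ x) = x := by
      rw [Matrix.mulVec_mulVec, Matrix.nonsing_inv_mul _ (Ne.isUnit hdet), Matrix.one_mulVec]
    rw [hz, Matrix.mulVec_zero] at h1
    exact hx h1.symm
  · exact h

lemma aux_posDef_conj {B C : Matrix (Fin D) (Fin D) ℝ} (hB : B.PosDef)
    (hC : C.IsHermitian) (hdet : C.det ≠ 0) : (C * B * C).PosDef := by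
  apply aux_posDef_of_posSemidef
  · have := hB.posSemidef.mul_mul_conjTranspose_same C
    rwa [hC.eq] at this
  · rw [Matrix.det_mul, Matrix.det_mul]
    exact mul_ne_zero (mul_ne_zero hdet hB.det_pos.ne') hdet

lemma aux_comb_posDef {A B : Matrix (Fin D) (Fin D) ℝ} (hA : A.PosDef) (hB : B.PosDef)
    {a b : ℝ} (ha : 0 ≤ a) (hb : 0 ≤ b) (hab : a + b = 1) : (a • A + b • B).PosDef := by
  rcases ha.eq_or_lt with rfl | ha'
  · obtain rfl : b = 1 := by linarith
    simpa using hB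
  rcases hb.eq_or_lt with rfl | hb'
  · obtain rfl : a = 1 := by linarith
    simpa using hA
  have hsm : ∀ {M : Matrix (Fin D) (Fin D) ℝ} {c : ℝ}, M.PosDef → 0 < c → (c • M).PosDef := by
    intro M c hM hc
    refine posDef_iff_dotProduct_mulVec.2 ⟨?_, fun x hx => ?_⟩
    · unfold Matrix.IsHermitian
      rw [Matrix.conjTranspose_smul, hM.1.eq]
      simp
    · rw [Matrix.smul_mulVec, dotProduct_smul, smul_eq_mul]
      exact mul_pos hc ((posDef_iff_dotProduct_mulVec.1 hM).2 hx)
  exact (hsm hA ha').add_posSemidef (hsm hB hb').posSemidef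

open scoped MatrixOrder in
lemma aux_logdet_concave {A B : Matrix (Fin D) (Fin D) ℝ} (hA : A.PosDef) (hB : B.PosDef)
    {a b : ℝ} (ha : 0 ≤ a) (hb : 0 ≤ b) (hab : a + b = 1) :
    a * Real.log A.det + b * Real.log B.det ≤ Real.log (a • A + b • B).det := by
  rcases ha.eq_or_lt with rfl | ha'
  · obtain rfl : b = 1 := by linarith
    simp
  rcases hb.eq_or_lt with rfl | hb'
  · obtain rfl : a = 1 := by linarith
    simp
  -- square root of A
  set S := CFC.sqrt A with hSdef
  have hS : S.PosSemidef := (CFC.sqrt_nonneg A).posSemidef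
  have hSS : S * S = A := CFC.sqrt_mul_sqrt_self A hA.posSemidef.nonneg
  have hdetS2 : S.det * S.det = A.det := by rw [← Matrix.det_mul, hSS]
  have hdetS : S.det ≠ 0 := by
    intro h
    rw [h, mul_zero] at hdetS2
    exact hA.det_pos.ne' hdetS2.symm
  have hSpd : S.PosDef := aux_posDef_of_posSemidef hS hdetS
  have hSipd : S⁻¹.PosDef := hSpd.inv
  set M := S⁻¹ * B * S⁻¹ with hMdef
  have hM : M.PosDef := aux_posDef_conj hB hSipd.1 (by
    rw [Matrix.det_nonsing_inv, Ring.inverse_eq_inv']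
    exact inv_ne_zero hdetS)
  set ev := hM.1.eigenvalues with hevdef
  have hev : ∀ i, 0 < ev i := fun i => hM.eigenvalues_pos i
  have hpos : ∀ i, 0 < a + b * ev i := fun i => by have := mul_pos hb' (hev i); linarith
  -- S * (a•1 + b•M) * S = a•A + b•B
  have hid : S * (a • (1 : Matrix (Fin D) (Fin D) ℝ) + b • M) * S = a • A + b • B := by
    have h1 : S * M * S = B := by
      rw [hMdef, ← Matrix.mul_assoc, ← Matrix.mul_assoc,
        Matrix.mul_nonsing_inv _ (Ne.isUnit hdetS), Matrix.one_mul, Matrix.mul_assoc,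
        Matrix.nonsing_inv_mul _ (Ne.isUnit hdetS), Matrix.mul_one]
    simp only [Matrix.mul_add, Matrix.add_mul, Matrix.mul_smul, Matrix.smul_mul,
      Matrix.mul_one]
    rw [hSS, h1]
  -- spectral theorem for M
  set U : Matrix (Fin D) (Fin D) ℝ := (hM.1.eigenvectorUnitary : Matrix (Fin D) (Fin D) ℝ)
    with hUdef
  have hUU : U * star U = 1 := (Matrix.mem_unitaryGroup_iff).mp hM.1.eigenvectorUnitary.2
  have hspec : M = U * Matrix.diagonal ev * star U := by
    have := hM.1.spectral_theorem
    rwa [RCLike.ofReal_real_eq_id, Function.id_comp] at this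
  have hdg : a • (1 : Matrix (Fin D) (Fin D) ℝ) + b • Matrix.diagonal ev
      = Matrix.diagonal (fun i => a + b * ev i) := by
    ext i j
    by_cases h : i = j <;>
      simp [Matrix.one_apply, Matrix.diagonal_apply, h]
  have hcomb : a • (1 : Matrix (Fin D) (Fin D) ℝ) + b • M
      = U * Matrix.diagonal (fun i => a + b * ev i) * star U := by
    rw [hspec, ← hdg, Matrix.mul_add, Matrix.add_mul]
    simp only [Matrix.mul_smul, Matrix.smul_mul, Matrix.mul_one]
    rw [hUU]
  have hdetUU : U.det * (star U).det = 1 := by rw [← Matrix.det_mul, hUU, Matrix.det_one]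
  have hdet1 : (a • (1 : Matrix (Fin D) (Fin D) ℝ) + b • M).det = ∏ i, (a + b * ev i) := by
    rw [hcomb, Matrix.det_mul, Matrix.det_mul, Matrix.det_diagonal]
    linear_combination (∏ i, (a + b * ev i)) * hdetUU
  have hdetcomb : (a • A + b • B).det = A.det * ∏ i, (a + b * ev i) := by
    rw [← hid, Matrix.det_mul, Matrix.det_mul, hdet1]
    linear_combination (∏ i, (a + b * ev i)) * hdetS2
  have hdetM : M.det = ∏ i, ev i := by simpa using hM.1.det_eq_prod_eigenvalues
  have hdetM' : A.det * M.det = B.det := by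
    rw [hMdef, Matrix.det_mul, Matrix.det_mul, Matrix.det_nonsing_inv, Ring.inverse_eq_inv']
    field_simp
    rw [← hdetS2]
    ring
  have hkey : ∀ i, b * Real.log (ev i) ≤ Real.log (a + b * ev i) := by
    intro i
    have := strictConcaveOn_log_Ioi.concaveOn.2 (Set.mem_Ioi.2 one_pos)
      (Set.mem_Ioi.2 (hev i)) ha hb hab
    simpa using this
  have h1 : Real.log (a • A + b • B).det
      = Real.log A.det + ∑ i, Real.log (a + b * ev i) := by
    rw [hdetcomb, Real.log_mul hA.det_pos.ne'
      (Finset.prod_pos (fun i _ => hpos i)).ne',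
      Real.log_prod (fun i _ => (hpos i).ne')]
  have h2 : ∑ i, b * Real.log (ev i) ≤ ∑ i, Real.log (a + b * ev i) :=
    Finset.sum_le_sum fun i _ => hkey i
  have h3 : ∑ i, b * Real.log (ev i) = b * (Real.log B.det - Real.log A.det) := by
    rw [← Finset.mul_sum, ← Real.log_prod (fun i _ => (hev i).ne'), ← hdetM]
    congr 1
    rw [← hdetM', Real.log_mul hA.det_pos.ne' hM.det_pos.ne']
    ring
  obtain rfl : b = 1 - a := by linarith
  linarith [h1, h2, h3]

lemma aux_quad_convex {Q : Matrix (Fin D) (Fin D) ℝ} (hQ : Q.PosSemidef) (x y : Fin D → ℝ)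
    {a b : ℝ} (ha : 0 ≤ a) (hb : 0 ≤ b) (hab : a + b = 1) :
    dotProduct (a • x + b • y) (Q.mulVec (a • x + b • y))
      ≤ a * dotProduct x (Q.mulVec x) + b * dotProduct y (Q.mulVec y) := by
  have key := (posSemidef_iff_dotProduct_mulVec.1 hQ).2 (x - y)
  rw [star_trivial] at key
  obtain rfl : b = 1 - a := by linarith
  simp only [Matrix.mulVec_add, Matrix.mulVec_smul, Matrix.mulVec_sub, dotProduct_add,
    add_dotProduct, dotProduct_smul, smul_dotProduct,
    dotProduct_sub, sub_dotProduct, smul_eq_mul] at key ⊢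
  nlinarith [mul_nonneg (mul_nonneg ha hb) key]



/-- The set of pairs `(m, V)` with `V` positive definite is convex, and the
Kullback–Leibler divergence from `N(m, V)` to `N(0, K)`,
`h(m, V) = ½(−log det V + log det K + trace(K⁻¹V) + mᵀK⁻¹m − D)`,
is (jointly) convex on it. -/
theorem stmt_15 (D : ℕ) (hD : 1 ≤ D) (K : Matrix (Fin D) (Fin D) ℝ) (hK : K.PosDef) :
    Convex ℝ {p : (Fin D → ℝ) × Matrix (Fin D) (Fin D) ℝ | p.2.PosDef} ∧
    ConvexOn ℝ {p : (Fin D → ℝ) × Matrix (Fin D) (Fin D) ℝ | p.2.PosDef}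
      (fun p => (1 / 2) * (-Real.log p.2.det + Real.log K.det +
        (K⁻¹ * p.2).trace + dotProduct p.1 (K⁻¹.mulVec p.1) - D)) := by
  have hconv : Convex ℝ {p : (Fin D → ℝ) × Matrix (Fin D) (Fin D) ℝ | p.2.PosDef} := by
    intro p hp q hq a b ha hb hab
    have := aux_comb_posDef hp hq ha hb hab
    simpa [Set.mem_setOf_eq] using this
  refine ⟨hconv, hconv, ?_⟩
  intro p hp q hq a b ha hb hab
  have hlog := aux_logdet_concave hp hq ha hb hab
  have hquad := aux_quad_convex hK.inv.posSemidef p.1 q.1 ha hb hab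
  have htr : (K⁻¹ * (a • p.2 + b • q.2)).trace
      = a * (K⁻¹ * p.2).trace + b * (K⁻¹ * q.2).trace := by
    rw [Matrix.mul_add, Matrix.mul_smul, Matrix.mul_smul, Matrix.trace_add,
      Matrix.trace_smul, Matrix.trace_smul, smul_eq_mul, smul_eq_mul]
  obtain rfl : b = 1 - a := by linarith
  simp only [Prod.smul_fst, Prod.smul_snd, Prod.fst_add, Prod.snd_add, smul_eq_mul]
  rw [htr]
  linarith [hlog, hquad]
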